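/- With notation as in the Dieudonné-module setup over an algebraically closed field k of characteristic p > 0: let M be a W-submodule of N with F(M) ⊆ M, V(M) ⊆ M and (F,V)N ⊆ M ⊆ N such that both quotients M/(F,V)N and N/M are isomorphic to k = W/pW as W-modules. Then there exists a pair (x₁, x₂) ∈ k² \ {(0,0)}, unique up to multiplication by a common scalar in k^×, with M = (F,V)N + W·([x₁], 0, 0, [x₂], 0, 0). Moreover, for every (x₁, x₂) ∈ k² the W-submodule M_{(x₁,x₂)} := (F,V)N + W·([x₁], 0, 0, [x₂], 0, 0) is stable under F and V; and if x₁ ≠ 0 and x₂ ≠ 0, then F(M_{(x₁,x₂)}) + V(M_{(x₁,x₂)}) = (F,V)N. -/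

import Mathlib

set_option linter.unusedSectionVars false


noncomputable section

namespace Stmt8

variable (p : ℕ) [Fact p.Prime] (k : Type) [Field k] [CharP k p] [IsAlgClosed k]

/-- The Witt-vector Frobenius `σ`, a ring automorphism of `W = W(k)`. -/
def σ : WittVector p k ≃+* WittVector p k := WittVector.frobeniusEquiv p k

/-- The operator `F` on `N = D₁₂ ⊕ D₂₁ = W^6`. -/
def Fop (x : Fin 6 → WittVector p k) : Fin 6 → WittVector p k :=
  ![(p : WittVector p k) * σ p k (x 1), (p : WittVector p k) * σ p k (x 2), σ p k (x 0),
    (p : WittVector p k) * σ p k (x 5), σ p k (x 3), σ p k (x 4)]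

/-- The operator `V` on `N = D₁₂ ⊕ D₂₁ = W^6`. -/
def Vop (x : Fin 6 → WittVector p k) : Fin 6 → WittVector p k :=
  ![(p : WittVector p k) * (σ p k).symm (x 2), (σ p k).symm (x 0), (σ p k).symm (x 1),
    (p : WittVector p k) * (σ p k).symm (x 4), (p : WittVector p k) * (σ p k).symm (x 5),
    (σ p k).symm (x 3)]

/-- The `W`-submodule `(F,V)N = F(N) + V(N) = pW × W × W × pW × W × W` of `N = W^6`. -/
def FVN : Submodule (WittVector p k) (Fin 6 → WittVector p k) :=
  Submodule.comap (LinearMap.proj (R := WittVector p k) (φ := fun _ : Fin 6 => WittVector p k) 0)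
      (Ideal.span {(p : WittVector p k)}) ⊓
    Submodule.comap (LinearMap.proj (R := WittVector p k) (φ := fun _ : Fin 6 => WittVector p k) 3)
      (Ideal.span {(p : WittVector p k)})

/-- The vector `([x₁], 0, 0, [x₂], 0, 0) ∈ N`, where `[·]` is the Teichmüller lift. -/
def gen (x : k × k) : Fin 6 → WittVector p k :=
  ![WittVector.teichmuller p x.1, 0, 0, WittVector.teichmuller p x.2, 0, 0]

/-- The `W`-submodule `M_{(x₁,x₂)} = (F,V)N + W·([x₁],0,0,[x₂],0,0)` of `N`. -/
def Mmod (x : k × k) : Submodule (WittVector p k) (Fin 6 → WittVector p k) :=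
  FVN p k ⊔ Submodule.span (WittVector p k) {gen p k x}

section Helpers

lemma cc_p : WittVector.constantCoeff ((p : WittVector p k)) = 0 := by
  rw [map_natCast]; exact CharP.cast_eq_zero k p

lemma p_dvd_iff (a : WittVector p k) :
    (p : WittVector p k) ∣ a ↔ a.coeff 0 = 0 := by
  constructor
  · rintro ⟨b, rfl⟩
    have : WittVector.constantCoeff ((p : WittVector p k) * b) = 0 := by
      rw [map_mul, cc_p, zero_mul]
    exact this
  · intro h
    refine ⟨(WittVector.frobeniusEquiv p k).symm (a.shift 1), ?_⟩
    have h1 : a = WittVector.verschiebung (a.shift 1) := by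
      have := WittVector.eq_iterate_verschiebung (x := a) (n := 1)
        (by intro i hi; interval_cases i; exact h)
      simpa using this
    have h2 : WittVector.frobenius ((WittVector.frobeniusEquiv p k).symm (a.shift 1))
        = a.shift 1 := (WittVector.frobeniusEquiv p k).apply_symm_apply (a.shift 1)
    conv_lhs => rw [h1, ← h2, WittVector.verschiebung_frobenius]
    exact mul_comm _ _

lemma unit_of_not_dvd {a : WittVector p k} (h : ¬ (p : WittVector p k) ∣ a) : IsUnit a :=
  WittVector.isUnit_of_coeff_zero_ne_zero a (fun h0 => h ((p_dvd_iff p k a).mpr h0))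

lemma quot_cyclic (u v : WittVector p k ⧸ (Ideal.span {(p : WittVector p k)}
    : Submodule (WittVector p k) (WittVector p k))) (hu : u ≠ 0) :
    ∃ w : WittVector p k, v = w • u := by
  obtain ⟨u₀, rfl⟩ := Submodule.Quotient.mk_surjective _ u
  obtain ⟨v₀, rfl⟩ := Submodule.Quotient.mk_surjective _ v
  have hu₀ : ¬ (p : WittVector p k) ∣ u₀ := fun h =>
    hu ((Submodule.Quotient.mk_eq_zero _).mpr (Ideal.mem_span_singleton.mpr h))
  obtain ⟨w, hw⟩ := isUnit_iff_exists_inv'.mp (unit_of_not_dvd p k hu₀)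
  refine ⟨v₀ * w, ?_⟩
  rw [← Submodule.Quotient.mk_smul, smul_eq_mul, mul_assoc, hw, mul_one]

lemma dvd_sub_of_coeff_eq (a b : WittVector p k) (h : a.coeff 0 = b.coeff 0) :
    (p : WittVector p k) ∣ a - b := by
  rw [p_dvd_iff]
  rw [show (a - b).coeff 0 = a.coeff 0 - b.coeff 0 from
    map_sub (WittVector.constantCoeff (p := p) (R := k)) a b, h, sub_self]

lemma teich_coeff_eq {r s : k} {w : WittVector p k}
    (h : (p : WittVector p k) ∣ WittVector.teichmuller p r - w * WittVector.teichmuller p s) :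
    r = w.coeff 0 * s := by
  rw [p_dvd_iff] at h
  have h2 : WittVector.constantCoeff
      (WittVector.teichmuller p r - w * WittVector.teichmuller p s)
      = r - w.coeff 0 * s := by
    rw [map_sub, map_mul,
      show WittVector.constantCoeff (WittVector.teichmuller p r) = r from
        WittVector.teichmuller_coeff_zero p r,
      show WittVector.constantCoeff (WittVector.teichmuller p s) = s from
        WittVector.teichmuller_coeff_zero p s]
    rfl
  have h3 : r - w.coeff 0 * s = 0 := by rw [← h2]; exact h
  exact sub_eq_zero.mp h3

lemma mem_FVN_iff (y : Fin 6 → WittVector p k) :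
    y ∈ FVN p k ↔ (p : WittVector p k) ∣ y 0 ∧ (p : WittVector p k) ∣ y 3 := by
  simp [FVN, Submodule.mem_inf, Submodule.mem_comap, Ideal.mem_span_singleton]

lemma mem_Mmod_iff (x : k × k) (y : Fin 6 → WittVector p k) :
    y ∈ Mmod p k x ↔ ∃ w : WittVector p k,
      (p : WittVector p k) ∣ y 0 - w * WittVector.teichmuller p x.1 ∧
      (p : WittVector p k) ∣ y 3 - w * WittVector.teichmuller p x.2 := by
  constructor
  · intro hy
    rw [Mmod, Submodule.mem_sup] at hy
    obtain ⟨f, hf, g, hg, rfl⟩ := hy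
    rw [Submodule.mem_span_singleton] at hg
    obtain ⟨w, rfl⟩ := hg
    rw [mem_FVN_iff] at hf
    refine ⟨w, ?_, ?_⟩
    · simpa [gen, add_sub_cancel_right] using hf.1
    · simpa [gen, add_sub_cancel_right] using hf.2
  · rintro ⟨w, h0, h3⟩
    rw [Mmod, Submodule.mem_sup]
    refine ⟨y - w • gen p k x, ?_, w • gen p k x,
      Submodule.smul_mem _ _ (Submodule.mem_span_singleton_self _), by abel⟩
    rw [mem_FVN_iff]
    constructor
    · simpa [gen] using h0
    · simpa [gen] using h3

lemma Fop_mem_FVN (z : Fin 6 → WittVector p k) : Fop p k z ∈ FVN p k := by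
  rw [mem_FVN_iff]
  exact ⟨dvd_mul_right _ _, dvd_mul_right _ _⟩

lemma Vop_mem_FVN (z : Fin 6 → WittVector p k) : Vop p k z ∈ FVN p k := by
  rw [mem_FVN_iff]
  exact ⟨dvd_mul_right _ _, dvd_mul_right _ _⟩

end Helpers

lemma hit (x : k × k) (hx1 : x.1 ≠ 0) (hx2 : x.2 ≠ 0) (y : Fin 6 → WittVector p k)
    (hy : y ∈ FVN p k) :
    ∃ a ∈ Mmod p k x, ∃ b ∈ Mmod p k x, y = Fop p k a + Vop p k b := by
  rw [mem_FVN_iff] at hy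
  obtain ⟨⟨u, hu⟩, ⟨v, hv⟩⟩ := hy
  set t₁ := WittVector.teichmuller p x.1 with ht₁
  set t₂ := WittVector.teichmuller p x.2 with ht₂
  have hut₁ : IsUnit t₁ := WittVector.isUnit_of_coeff_zero_ne_zero t₁
    (by rw [ht₁, WittVector.teichmuller_coeff_zero]; exact hx1)
  have hut₂ : IsUnit t₂ := WittVector.isUnit_of_coeff_zero_ne_zero t₂
    (by rw [ht₂, WittVector.teichmuller_coeff_zero]; exact hx2)
  obtain ⟨t₁', h₁⟩ := isUnit_iff_exists_inv'.mp hut₁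
  obtain ⟨t₂', h₂⟩ := isUnit_iff_exists_inv'.mp hut₂
  set wa := (σ p k).symm (y 4) * t₂' with hwa
  set wb := σ p k (y 1) * t₁' with hwb
  set b3 := wb * t₂ with hb3
  set a : Fin 6 → WittVector p k :=
    ![wa * t₁, (σ p k).symm u, 0, wa * t₂, (σ p k).symm (y 5 - (σ p k).symm b3),
      (σ p k).symm v] with ha
  set b : Fin 6 → WittVector p k :=
    ![wb * t₁, σ p k (y 2 - σ p k (wa * t₁)), 0, b3, 0, 0] with hb
  have hwbt : wb * t₁ = σ p k (y 1) := by
    rw [hwb, mul_assoc, h₁, mul_one]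
  have hwat : wa * t₂ = (σ p k).symm (y 4) := by
    rw [hwa, mul_assoc, h₂, mul_one]
  refine ⟨a, ?_, b, ?_, ?_⟩
  · rw [mem_Mmod_iff]
    exact ⟨wa, by simp [ha, ht₁], by simp [ha, ht₂]⟩
  · rw [mem_Mmod_iff]
    exact ⟨wb, by simp [hb, ht₁], by simp [hb, hb3, ht₂]⟩
  · funext i
    fin_cases i
    · show y 0 = (p : WittVector p k) * σ p k ((σ p k).symm u) + (p : WittVector p k) * (σ p k).symm 0
      rw [hu, RingEquiv.apply_symm_apply, map_zero, mul_zero, add_zero]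
    · show y 1 = (p : WittVector p k) * σ p k 0 + (σ p k).symm (wb * t₁)
      rw [hwbt, RingEquiv.symm_apply_apply, map_zero, mul_zero, zero_add]
    · show y 2 = σ p k (wa * t₁) + (σ p k).symm (σ p k (y 2 - σ p k (wa * t₁)))
      rw [RingEquiv.symm_apply_apply]; ring
    · show y 3 = (p : WittVector p k) * σ p k ((σ p k).symm v) + (p : WittVector p k) * (σ p k).symm 0
      rw [hv, RingEquiv.apply_symm_apply, map_zero, mul_zero, add_zero]
    · show y 4 = σ p k (wa * t₂) + (p : WittVector p k) * (σ p k).symm 0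
      rw [hwat, RingEquiv.apply_symm_apply, map_zero, mul_zero, add_zero]
    · show y 5 = σ p k ((σ p k).symm (y 5 - (σ p k).symm b3)) + (σ p k).symm b3
      rw [RingEquiv.apply_symm_apply]; ring

/-- If `M` is an `F`- and `V`-stable `W`-submodule with
`(F,V)N ⊆ M ⊆ N` and `M/(F,V)N ≅ k ≅ N/M` as `W`-modules (`k = W/pW`), then
`M = (F,V)N + W·([x₁],0,0,[x₂],0,0)` for a pair `(x₁,x₂) ≠ (0,0)`, unique up to a common
scalar in `k^×`.  Moreover every `M_{(x₁,x₂)}` is stable under `F` and `V`, and if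
`x₁ ≠ 0` and `x₂ ≠ 0` then `F(M_{(x₁,x₂)}) + V(M_{(x₁,x₂)}) = (F,V)N`. -/
theorem stmt_8 (M : Submodule (WittVector p k) (Fin 6 → WittVector p k))
    (hMF : ∀ y ∈ M, Fop p k y ∈ M) (hMV : ∀ y ∈ M, Vop p k y ∈ M)
    (hlow : FVN p k ≤ M)
    (hq1 : Nonempty ((↥M ⧸ (Submodule.comap M.subtype (FVN p k))) ≃ₗ[WittVector p k]
      (WittVector p k ⧸ (Ideal.span {(p : WittVector p k)}
        : Submodule (WittVector p k) (WittVector p k)))))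
    (hq2 : Nonempty (((Fin 6 → WittVector p k) ⧸ M) ≃ₗ[WittVector p k]
      (WittVector p k ⧸ (Ideal.span {(p : WittVector p k)}
        : Submodule (WittVector p k) (WittVector p k))))) :
    (∃ x : k × k, x ≠ 0 ∧ M = Mmod p k x) ∧
    (∀ x y : k × k, x ≠ 0 → y ≠ 0 → M = Mmod p k x → M = Mmod p k y →
      ∃ c : kˣ, y.1 = (c : k) * x.1 ∧ y.2 = (c : k) * x.2) ∧
    (∀ x : k × k,
      (∀ z ∈ Mmod p k x, Fop p k z ∈ Mmod p k x) ∧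
      (∀ z ∈ Mmod p k x, Vop p k z ∈ Mmod p k x)) ∧
    (∀ x : k × k, x.1 ≠ 0 → x.2 ≠ 0 →
      {y : Fin 6 → WittVector p k |
          ∃ a ∈ Mmod p k x, ∃ b ∈ Mmod p k x, y = Fop p k a + Vop p k b}
        = (FVN p k : Set (Fin 6 → WittVector p k))) := by
  obtain ⟨e⟩ := hq1
  -- find an element of M not in FVN
  have hex : ∃ m, m ∈ M ∧ m ∉ FVN p k := by
    by_contra hall
    push_neg at hall
    have htop : Submodule.comap M.subtype (FVN p k) = ⊤ := by
      rw [Submodule.eq_top_iff']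
      intro z; exact hall z z.2
    have hsub : Subsingleton (↥M ⧸ Submodule.comap M.subtype (FVN p k)) := by
      rw [Submodule.Quotient.subsingleton_iff]; exact htop
    have hsub2 : Subsingleton (WittVector p k ⧸ (Ideal.span {(p : WittVector p k)}
        : Submodule (WittVector p k) (WittVector p k))) :=
      e.toEquiv.subsingleton_congr.mp hsub
    have h1 : (Submodule.Quotient.mk (1 : WittVector p k) :
        WittVector p k ⧸ (Ideal.span {(p : WittVector p k)}
          : Submodule (WittVector p k) (WittVector p k))) = 0 := Subsingleton.elim _ _
    rw [Submodule.Quotient.mk_eq_zero, Ideal.mem_span_singleton] at h1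
    have h2 := (p_dvd_iff p k 1).mp h1
    rw [WittVector.one_coeff_zero] at h2
    exact one_ne_zero h2
  obtain ⟨m, hm, hmnot⟩ := hex
  set x₀ : k × k := ((m 0).coeff 0, (m 3).coeff 0) with hx₀
  have hx0ne : x₀ ≠ 0 := by
    intro h
    apply hmnot
    rw [mem_FVN_iff]
    exact ⟨(p_dvd_iff p k _).mpr (congrArg Prod.fst h),
      (p_dvd_iff p k _).mpr (congrArg Prod.snd h)⟩
  have hmgen : m - gen p k x₀ ∈ FVN p k := by
    rw [mem_FVN_iff]
    exact ⟨dvd_sub_of_coeff_eq p k _ _ (WittVector.teichmuller_coeff_zero p x₀.1).symm,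
      dvd_sub_of_coeff_eq p k _ _ (WittVector.teichmuller_coeff_zero p x₀.2).symm⟩
  have hle1 : Mmod p k x₀ ≤ M := by
    rw [Mmod]
    apply sup_le hlow
    rw [Submodule.span_le, Set.singleton_subset_iff, SetLike.mem_coe]
    have hg : gen p k x₀ = m - (m - gen p k x₀) := by abel
    rw [hg]
    exact M.sub_mem hm (hlow hmgen)
  have hle2 : M ≤ Mmod p k x₀ := by
    intro y hy
    set m' : ↥M := ⟨m, hm⟩
    set y' : ↥M := ⟨y, hy⟩
    have hm'ne : e (Submodule.Quotient.mk m') ≠ 0 := by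
      intro h
      apply hmnot
      have h0 := e.map_eq_zero_iff.mp h
      rw [Submodule.Quotient.mk_eq_zero] at h0
      exact h0
    obtain ⟨w, hw⟩ := quot_cyclic p k _ (e (Submodule.Quotient.mk y')) hm'ne
    have h3 : (Submodule.Quotient.mk y' : ↥M ⧸ Submodule.comap M.subtype (FVN p k))
        = Submodule.Quotient.mk (w • m') := by
      apply e.injective
      rw [hw, Submodule.Quotient.mk_smul, map_smul]
    have hmemC : y' - w • m' ∈ Submodule.comap M.subtype (FVN p k) :=
      (Submodule.Quotient.eq _).mp h3
    have hc : y - w • m ∈ FVN p k := by simpa using hmemC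
    rw [Mmod, Submodule.mem_sup]
    refine ⟨(y - w • m) + w • (m - gen p k x₀),
      add_mem hc (Submodule.smul_mem _ _ hmgen), w • gen p k x₀,
      Submodule.smul_mem _ _ (Submodule.mem_span_singleton_self _), ?_⟩
    rw [smul_sub]; abel
  refine ⟨⟨x₀, hx0ne, le_antisymm hle2 hle1⟩, ?_, ?_, ?_⟩
  · -- uniqueness up to scalar
    intro x y hxne hyne hMx hMy
    have hgy : gen p k y ∈ Mmod p k x := by
      rw [← hMx, hMy]
      exact Submodule.mem_sup_right (Submodule.mem_span_singleton_self _)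
    rw [mem_Mmod_iff] at hgy
    obtain ⟨w, h0, h3⟩ := hgy
    have e1 : y.1 = w.coeff 0 * x.1 := teich_coeff_eq p k h0
    have e2 : y.2 = w.coeff 0 * x.2 := teich_coeff_eq p k h3
    have hc : w.coeff 0 ≠ 0 := by
      intro h
      apply hyne
      rw [Prod.ext_iff]
      exact ⟨by rw [e1, h, zero_mul]; rfl, by rw [e2, h, zero_mul]; rfl⟩
    exact ⟨Units.mk0 _ hc, e1, e2⟩
  · -- stability
    intro x
    exact ⟨fun z _ => Submodule.mem_sup_left (Fop_mem_FVN p k z),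
      fun z _ => Submodule.mem_sup_left (Vop_mem_FVN p k z)⟩
  · -- image equals FVN
    intro x hx1 hx2
    ext y
    simp only [Set.mem_setOf_eq, SetLike.mem_coe]
    constructor
    · rintro ⟨a, _, b, _, rfl⟩
      exact add_mem (Fop_mem_FVN p k a) (Vop_mem_FVN p k b)
    · intro h
      exact hit p k x hx1 hx2 y h

end Stmt8
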